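/- Fix n ≥ 1. For ε ∈ (0, n+1), let x*(ε) = (ε/(n+1))^{1/n} and define the average unfairness of the optimal Pigou flow as U^A(ε) = (x*(ε)^{n+1} + (1−x*(ε))·ε) / ((x*(ε))^n) where (x*(ε))^n = ε/(n+1) is the minimum used latency. Then U^A(ε) → n+1 as ε → 0⁺. -/

import Mathlib

/-- Average unfairness of the optimal Pigou flow tends to n+1 as ε → 0⁺. -/
theorem stmt_6 (n : ℕ) (hn : 1 ≤ n) :
    Filter.Tendsto
      (fun ε : ℝ =>
        (((ε / ((n : ℝ) + 1)) ^ ((n : ℝ)⁻¹)) ^ (n + 1) +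
            (1 - (ε / ((n : ℝ) + 1)) ^ ((n : ℝ)⁻¹)) * ε) / (ε / ((n : ℝ) + 1)))
      (nhdsWithin 0 (Set.Ioi 0)) (nhds ((n : ℝ) + 1)) := by
  have hn0 : (0:ℝ) < (n:ℝ) := by exact_mod_cast hn
  have hc : (0:ℝ) < (n:ℝ) + 1 := by positivity
  have hg : Filter.Tendsto (fun ε : ℝ => (ε / ((n:ℝ)+1)) ^ ((n:ℝ)⁻¹))
      (nhdsWithin 0 (Set.Ioi 0)) (nhds 0) := by
    have h1 : Filter.Tendsto (fun ε : ℝ => ε / ((n:ℝ)+1)) (nhdsWithin 0 (Set.Ioi 0)) (nhds 0) := by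
      have := (continuous_id.div_const ((n:ℝ)+1)).tendsto 0
      simpa using this.mono_left nhdsWithin_le_nhds
    have h2 : ContinuousAt (fun x : ℝ => x ^ ((n:ℝ)⁻¹)) 0 :=
      Real.continuousAt_rpow_const 0 _ (Or.inr (by positivity))
    have := h2.tendsto.comp h1
    simpa [Function.comp_def, Real.zero_rpow (by positivity : ((n:ℝ)⁻¹) ≠ 0)] using this
  have hmain : Filter.Tendsto (fun ε : ℝ => (ε / ((n:ℝ)+1)) ^ ((n:ℝ)⁻¹)
      + ((n:ℝ)+1) * (1 - (ε / ((n:ℝ)+1)) ^ ((n:ℝ)⁻¹))) (nhdsWithin 0 (Set.Ioi 0))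
      (nhds ((n:ℝ)+1)) := by
    have := hg.add ((((tendsto_const_nhds (x := (1:ℝ))).sub hg)).const_mul ((n:ℝ)+1))
    simpa using this
  refine hmain.congr' ?_
  filter_upwards [self_mem_nhdsWithin] with ε (hε : 0 < ε)
  set t : ℝ := ε / ((n:ℝ)+1) with ht_def
  have ht : 0 < t := div_pos hε hc
  set x : ℝ := t ^ ((n:ℝ)⁻¹) with hx_def
  have hpow : x ^ (n+1) = t ^ ((n:ℝ)⁻¹ * ((n:ℝ)+1)) := by
    rw [hx_def, ← Real.rpow_natCast (t ^ ((n:ℝ)⁻¹)) (n+1), ← Real.rpow_mul ht.le]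
    push_cast
    ring_nf
  have hxt : x ^ (n+1) / t = x := by
    rw [hpow, ← Real.rpow_sub_one ht.ne']
    congr 1
    field_simp
    ring
  have hεt : ε / t = (n:ℝ)+1 := by
    rw [ht_def]
    field_simp
  calc x + ((n:ℝ)+1) * (1 - x)
      = x ^ (n+1) / t + (1 - x) * ε / t := by
        rw [hxt, mul_div_assoc, hεt]; ring
    _ = (x ^ (n+1) + (1 - x) * ε) / t := by ring
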